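/- In a free group, if two elements a and b commute, then there exists an element z and integers m, n such that a = z^m and b = z^n. -/

import Mathlib

open Equiv in
lemma freeGroup_of_commute_eq {ι : Type*} {x y : ι}
    (h : FreeGroup.of x * FreeGroup.of y = FreeGroup.of y * FreeGroup.of x) : x = y := by
  classical
  by_contra hxy
  let f : ι → Equiv.Perm (Fin 3) :=
    fun i => if i = x then Equiv.swap 0 1 else if i = y then Equiv.swap 1 2 else 1
  have h2 := congrArg (FreeGroup.lift f) h
  simp only [map_mul, FreeGroup.lift_apply_of, f, if_pos rfl, if_neg (Ne.symm hxy)] at h2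
  simp only [if_true] at h2
  exact absurd h2 (by decide)

lemma freeGroup_subsingleton_cyclic {ι : Type*} [Subsingleton ι] (g : FreeGroup ι)
    (i : ι) : ∃ n : ℤ, g = FreeGroup.of i ^ n := by
  induction g using FreeGroup.induction_on with
  | C1 => exact ⟨0, by simp⟩
  | of x => exact ⟨1, by rw [Subsingleton.elim x i, zpow_one]⟩
  | inv_of x hx =>
      obtain ⟨n, hn⟩ := hx
      exact ⟨-n, by rw [hn, zpow_neg]⟩
  | mul x y hx hy =>
      obtain ⟨n, hn⟩ := hx; obtain ⟨m, hm⟩ := hy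
      exact ⟨n + m, by rw [hn, hm, zpow_add]⟩

/-- In a free group, if two elements commute, then they are both powers of a
common element. -/
theorem freeGroup_commute_common_power {α : Type*} (a b : FreeGroup α)
    (h : a * b = b * a) : ∃ (z : FreeGroup α) (m n : ℤ), a = z ^ m ∧ b = z ^ n := by
  classical
  set H : Subgroup (FreeGroup α) := Subgroup.closure {a, b} with hH
  have comm : ∀ x ∈ H, ∀ y ∈ H, x * y = y * x := by
    have : ∀ x ∈ ({a, b} : Set (FreeGroup α)), ∀ y ∈ ({a, b} : Set (FreeGroup α)),
        x * y = y * x := by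
      rintro x (rfl | rfl) y (rfl | rfl) <;> simp [h]
    intro x hx y hy
    induction hx using Subgroup.closure_induction with
    | mem x hxm =>
        induction hy using Subgroup.closure_induction with
        | mem y hym => exact this x hxm y hym
        | one => simp
        | mul y z _ _ hy hz => rw [← mul_assoc, hy, mul_assoc, hz, mul_assoc]
        | inv y _ hy => exact (Commute.inv_right hy).eq
    | one => simp
    | mul x z _ _ hx hz => rw [mul_assoc, hz, ← mul_assoc, hx, mul_assoc]
    | inv x _ hx => exact (Commute.inv_left hx).eq
  haveI : IsFreeGroup H := inferInstance
  obtain ⟨ι, ⟨basis⟩⟩ := IsFreeGroup.nonempty_basis (G := H)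
  haveI : Subsingleton ι := by
    constructor
    intro i j
    apply freeGroup_of_commute_eq (x := i) (y := j)
    have : (basis i : FreeGroup α) * (basis j) = (basis j) * (basis i) :=
      comm _ (basis i).2 _ (basis j).2
    have h2 : (basis i) * (basis j) = (basis j) * (basis i) := Subtype.ext this
    have := congrArg basis.repr h2
    simpa using this
  have ha : a ∈ H := Subgroup.subset_closure (by simp)
  have hb : b ∈ H := Subgroup.subset_closure (by simp)
  by_cases hι : Nonempty ι
  · obtain ⟨i⟩ := hι
    set z : H := basis.repr.symm (FreeGroup.of i) with hz
    obtain ⟨m, hm⟩ := freeGroup_subsingleton_cyclic (basis.repr ⟨a, ha⟩) i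
    obtain ⟨n, hn⟩ := freeGroup_subsingleton_cyclic (basis.repr ⟨b, hb⟩) i
    refine ⟨(z : FreeGroup α), m, n, ?_, ?_⟩
    · have : (⟨a, ha⟩ : H) = z ^ m := by
        apply basis.repr.injective
        rw [hm, map_zpow, hz]; simp
      calc a = ((⟨a, ha⟩ : H) : FreeGroup α) := rfl
        _ = ((z ^ m : H) : FreeGroup α) := by rw [this]
        _ = (z : FreeGroup α) ^ m := by norm_cast
    · have : (⟨b, hb⟩ : H) = z ^ n := by
        apply basis.repr.injective
        rw [hn, map_zpow, hz]; simp
      calc b = ((⟨b, hb⟩ : H) : FreeGroup α) := rfl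
        _ = ((z ^ n : H) : FreeGroup α) := by rw [this]
        _ = (z : FreeGroup α) ^ n := by norm_cast
  · -- ι empty: FreeGroup ι is trivial, so H is trivial
    have : (⟨a, ha⟩ : H) = 1 := by
      apply basis.repr.injective
      have : basis.repr ⟨a, ha⟩ = 1 := by
        have := FreeGroup.toWord (basis.repr ⟨a, ha⟩)
        haveI : IsEmpty ι := not_nonempty_iff.mp hι
        exact Subsingleton.elim _ _
      simp [this]
    have hb1 : (⟨b, hb⟩ : H) = 1 := by
      apply basis.repr.injective
      haveI : IsEmpty ι := not_nonempty_iff.mp hι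
      exact Subsingleton.elim _ _
    refine ⟨1, 0, 0, ?_, ?_⟩
    · simpa using congrArg (Subtype.val) this
    · simpa using congrArg (Subtype.val) hb1
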